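/- arXiv:1910.06696 — 2 statements merged into one kernel-verified Lean document; each statement's English description precedes it below -/
import Mathlib

section
/- In a Lorentzian vector space, suppose a symmetric bilinear form Ric satisfies Ric(X, X) ≥ 0 for all lightlike vectors X, that T is timelike with Ric(T, Y) = λ·ḡ(T, Y) for all Y (T is an eigenvector of Ric), and ν is a future timelike unit vector with u = ḡ(T, ν) > 0 and ḡ(T,T) = −ϑ² < 0. Then Ric(ν, T_‖) ≥ 0, where T_‖ = T + u·ν is the projection of T onto the orthogonal complement of ν. If moreover Ric(X,X) > 0 for all nonzero lightlike X and Ric(ν, T_‖) = 0, then T_‖ = 0, i.e., T is parallel to ν. -/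
set_option maxHeartbeats 1000000 in
/-- Null convergence condition implies `Ric(ν, T_‖) ≥ 0` for an eigenvector `T` of `Ric`;
under the strict null convergence condition, `Ric(ν, T_‖) = 0` forces `T_‖ = 0`. -/
theorem stmt_5 {V : Type*} [AddCommGroup V] [Module ℝ V] [FiniteDimensional ℝ V]
    (hdim : 3 ≤ Module.finrank ℝ V)
    (g Ric : LinearMap.BilinForm ℝ V)
    (hgsymm : ∀ x y, g x y = g y x) (hRicsymm : ∀ x y, Ric x y = Ric y x)
    (ν : V) (hν : g ν ν = -1)
    (hLorentz : ∀ w : V, g ν w = 0 → w ≠ 0 → 0 < g w w)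
    (T : V) (ϑ : ℝ) (hϑ : 0 < ϑ) (hT : g T T = -ϑ ^ 2)
    (lam : ℝ) (heig : ∀ Y : V, Ric T Y = lam * g T Y)
    (u : ℝ) (hu : g T ν = u) (huϑ : ϑ ≤ u)
    (hNCC : ∀ X : V, g X X = 0 → 0 ≤ Ric X X) :
    0 ≤ Ric ν (T + u • ν) ∧
      ((∀ X : V, X ≠ 0 → g X X = 0 → 0 < Ric X X) →
        Ric ν (T + u • ν) = 0 → T + u • ν = 0) := by
  set Tp := T + u • ν with hTp
  have hu0 : 0 < u := lt_of_lt_of_le hϑ huϑ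
  by_cases h0 : Tp = 0
  · refine ⟨by rw [h0]; simp, fun _ _ => h0⟩
  -- g ν Tp = 0
  have hνT : g ν T = u := by rw [hgsymm ν T, hu]
  have hperp : g ν Tp = 0 := by
    simp [hTp, map_add, map_smul, smul_eq_mul, hν, hνT]
  have hperp' : g Tp ν = 0 := by rw [hgsymm]; exact hperp
  have hc : 0 < g Tp Tp := hLorentz Tp hperp h0
  set c := g Tp Tp with hcdef
  set s := Real.sqrt c with hs
  have hs0 : 0 < s := Real.sqrt_pos.mpr hc
  have hs2 : s * s = c := Real.mul_self_sqrt hc.le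
  set X := s • ν + Tp with hX
  -- X is null
  have hXX : g X X = 0 := by
    simp only [hX, map_add, map_smul, LinearMap.add_apply, LinearMap.smul_apply,
      smul_eq_mul, hν, hperp, hperp', ← hcdef]
    ring_nf
    nlinarith [hs2]
  set A := Ric ν ν with hA
  set B := Ric ν Tp with hB
  set C := Ric Tp Tp with hC
  -- eigenvector relations
  have hTasTp : T = Tp - u • ν := by rw [hTp]; abel
  have hgTν : g T ν = u := hu
  have hrel1 : B - u * A = lam * u := by
    have h1 := heig ν
    rw [hTasTp] at h1
    simpa [map_sub, map_smul, LinearMap.sub_apply, LinearMap.smul_apply, smul_eq_mul,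
      hν, hperp', hperp, hRicsymm Tp ν, ← hB, ← hA, hνT, hgsymm Tp ν] using h1
  have hrel2 : C - u * B = lam * c := by
    have h2 := heig Tp
    rw [hTasTp] at h2
    simpa [map_sub, map_smul, LinearMap.sub_apply, LinearMap.smul_apply, smul_eq_mul,
      hperp, ← hcdef, ← hB, ← hC, hRicsymm ν Tp] using h2
  -- expand Ric X X
  have hRXX : Ric X X = s * s * A + 2 * s * B + C := by
    simp only [hX, map_add, map_smul, LinearMap.add_apply, LinearMap.smul_apply,
      smul_eq_mul, ← hA, ← hB, ← hC, hRicsymm Tp ν]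
    ring
  -- key identity: u * Ric X X = (s + u)^2 * B
  have hkey : u * Ric X X = (s + u) ^ 2 * B := by
    rw [hRXX]
    linear_combination (-(s * s)) * hrel1 + u * hrel2 - (lam * u) * hs2
  have hsu : 0 < (s + u) ^ 2 := by positivity
  have hRXX0 : 0 ≤ Ric X X := hNCC X hXX
  have hBpos : 0 ≤ B := by nlinarith
  refine ⟨hBpos, fun hstrict hB0 => ?_⟩
  exfalso
  have hXne : X ≠ 0 := by
    intro hXe
    have : g ν X = 0 := by rw [hXe]; simp
    rw [hX] at this
    simp only [map_add, map_smul, smul_eq_mul, hν, hperp] at this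
    nlinarith
  have := hstrict X hXne hXX
  nlinarith
end

section
/- Suppose f : [0, ∞) × K → ℝ is continuous on a compact set K, satisfies the strong maximum principle in the sense that the oscillation osc f(t, ·) = max_x f(t,x) − min_x f(t,x) is strictly decreasing in t unless f(t, ·) is constant, and suppose translates f_i(t, x) = f(t + i, x) converge uniformly on [0, T] × K to a limit f_∞ also satisfying this principle. If osc f(t, ·) → ω_∞ as t → ∞, then osc f_∞(t, ·) = ω_∞ for all t ∈ [0, T]; consequently, if ω_∞ > 0, f_∞ is non-constant with constant positive oscillation, contradicting strict decrease, so ω_∞ = 0. -/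
open Filter Set

variable {K : Type*} [TopologicalSpace K] [CompactSpace K] [Nonempty K]

/-- The spatial oscillation of `f(t,·)`. -/
noncomputable def osc (f : ℝ → K → ℝ) (t : ℝ) : ℝ := (⨆ x, f t x) - ⨅ x, f t x

/-- Strong maximum principle on the time set `S`: if the oscillation agrees at two
distinct times of `S`, then `f(t,·)` is constant for all `t ∈ S`. -/
def SMP (f : ℝ → K → ℝ) (S : Set ℝ) : Prop :=
  ∀ t₁ ∈ S, ∀ t₂ ∈ S, t₁ < t₂ → osc f t₁ = osc f t₂ → ∀ t ∈ S, ∀ x y : K, f t x = f t y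

/-- If `f` satisfies the strong maximum principle, its translates converge uniformly on
`[0,T] × K` to `f_∞` which also satisfies it, and `osc f(t,·) → ω_∞`, then
`osc f_∞(t,·) = ω_∞` on `[0,T]` and consequently `ω_∞ = 0`. -/
theorem stmt_8 (T : ℝ) (hT : 0 < T) (f f_inf : ℝ → K → ℝ)
    (hf : Continuous (Function.uncurry f)) (hf_inf : Continuous (Function.uncurry f_inf))
    (hSMPf : SMP f (Set.Ici 0)) (hSMPinf : SMP f_inf (Set.Icc 0 T))
    (hconv : TendstoUniformlyOn (fun (i : ℕ) (p : ℝ × K) => f (p.1 + i) p.2)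
      (fun p => f_inf p.1 p.2) atTop (Set.Icc 0 T ×ˢ (Set.univ : Set K)))
    (ω_inf : ℝ) (hosc : Tendsto (fun t => osc f t) atTop (nhds ω_inf)) :
    (∀ t ∈ Set.Icc 0 T, osc f_inf t = ω_inf) ∧ ω_inf = 0 := by
  -- auxiliary: oscillation comparison under uniform closeness
  have osc_close : ∀ (g h : K → ℝ), Continuous g → Continuous h → ∀ ε : ℝ, 0 ≤ ε →
      (∀ x, |g x - h x| ≤ ε) →
      |((⨆ x, g x) - ⨅ x, g x) - ((⨆ x, h x) - ⨅ x, h x)| ≤ 2 * ε := by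
    intro g h hg hh ε hε hgh
    have bg : BddAbove (range g) := (isCompact_range hg).bddAbove
    have bh : BddAbove (range h) := (isCompact_range hh).bddAbove
    have bg' : BddBelow (range g) := (isCompact_range hg).bddBelow
    have bh' : BddBelow (range h) := (isCompact_range hh).bddBelow
    have sup_le : ∀ (u v : K → ℝ), BddAbove (range v) → (∀ x, u x ≤ v x + ε) →
        (⨆ x, u x) ≤ (⨆ x, v x) + ε := fun u v bv huv =>
      ciSup_le fun x => (huv x).trans (add_le_add_left (le_ciSup bv x) ε)
    have inf_le : ∀ (u v : K → ℝ), BddBelow (range u) → (∀ x, u x ≤ v x + ε) →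
        (⨅ x, u x) ≤ (⨅ x, v x) + ε := by
      intro u v bu huv
      have h : (⨅ x, u x) - ε ≤ ⨅ x, v x :=
        le_ciInf fun x => by have := ciInf_le bu x; linarith [huv x]
      linarith
    have h1 : (⨆ x, g x) ≤ (⨆ x, h x) + ε :=
      sup_le g h bh fun x => by have := abs_le.1 (hgh x); linarith [this.2]
    have h2 : (⨆ x, h x) ≤ (⨆ x, g x) + ε :=
      sup_le h g bg fun x => by have := abs_le.1 (hgh x); linarith [this.1]
    have h3 : (⨅ x, g x) ≤ (⨅ x, h x) + ε :=
      inf_le g h bg' fun x => by have := abs_le.1 (hgh x); linarith [this.2]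
    have h4 : (⨅ x, h x) ≤ (⨅ x, g x) + ε :=
      inf_le h g bh' fun x => by have := abs_le.1 (hgh x); linarith [this.1]
    rw [abs_le]; constructor <;> linarith
  have key : ∀ t ∈ Set.Icc (0:ℝ) T, osc f_inf t = ω_inf := by
    intro t ht
    have htend : Tendsto (fun i : ℕ => (t + (i:ℝ))) atTop atTop :=
      tendsto_atTop_add_const_left _ t tendsto_natCast_atTop_atTop
    have h1 : Tendsto (fun i : ℕ => osc f (t + i)) atTop (nhds ω_inf) := hosc.comp htend
    have h2 : Tendsto (fun i : ℕ => osc f (t + i)) atTop (nhds (osc f_inf t)) := by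
      rw [Metric.tendsto_atTop]
      intro ε hε
      have hconv' := (Metric.tendstoUniformlyOn_iff.1 hconv) (ε/3) (by linarith)
      rw [eventually_atTop] at hconv'
      obtain ⟨N, hN⟩ := hconv'
      refine ⟨N, fun n hn => ?_⟩
      have hcl : ∀ x : K, |f (t + n) x - f_inf t x| ≤ ε/3 := by
        intro x
        have := hN n hn (t, x) ⟨ht, mem_univ x⟩
        rw [Real.dist_eq, abs_sub_comm] at this
        exact this.le
      have hcg : Continuous (fun x => f (t + n) x) :=
        hf.comp (Continuous.prodMk_right (t + n))
      have hch : Continuous (fun x => f_inf t x) :=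
        hf_inf.comp (Continuous.prodMk_right t)
      have := osc_close _ _ hcg hch (ε/3) (by linarith) hcl
      rw [Real.dist_eq]
      calc |osc f (t + n) - osc f_inf t| ≤ 2 * (ε/3) := this
        _ < ε := by linarith
    exact tendsto_nhds_unique h2 h1
  refine ⟨key, ?_⟩
  have h0 : osc f_inf 0 = ω_inf := key 0 ⟨le_refl _, hT.le⟩
  have hTv : osc f_inf T = ω_inf := key T ⟨hT.le, le_refl _⟩
  have hconst := hSMPinf 0 ⟨le_refl _, hT.le⟩ T ⟨hT.le, le_refl _⟩ hT (h0.trans hTv.symm)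
  have : osc f_inf 0 = 0 := by
    obtain ⟨x0⟩ := ‹Nonempty K›
    have hfun : (fun x => f_inf 0 x) = fun _ => f_inf 0 x0 :=
      funext fun x => hconst 0 ⟨le_refl _, hT.le⟩ x x0
    unfold osc
    rw [show (⨆ x, f_inf 0 x) = ⨆ _ : K, f_inf 0 x0 from by rw [hfun],
        show (⨅ x, f_inf 0 x) = ⨅ _ : K, f_inf 0 x0 from by rw [hfun],
        ciSup_const, ciInf_const, sub_self]
  rw [← h0, this]
end
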